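/- arXiv:math/0212078 — 5 statements merged into one kernel-verified Lean document; each statement's English description precedes it below -/
import Mathlib

section
/- Let H be a complex Hilbert space and A a positive trace-class operator on H with trace 1 (a state). For a unit vector φ ∈ H with associated rank-one projection P_φ, the strength λ(A, P_φ) := sup { λ ∈ [0,1] : λ·P_φ ≤ A } satisfies λ(A, P_φ) = 0 if and only if φ ∉ range(A^{1/2}). -/
open scoped InnerProductSpace

variable {H : Type*} [NormedAddCommGroup H] [InnerProductSpace ℂ H] [CompleteSpace H]

/-- The trace of `A` is one: in every Hilbert basis, the diagonal sums to `1`. -/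
def HasTraceOne (A : H →L[ℂ] H) : Prop :=
  ∀ (w : Set H) (b : HilbertBasis w ℂ H),
    HasSum (fun i => RCLike.re (⟪(b i : H), A (b i)⟫_ℂ)) 1

/-- A state: a positive (trace-class) operator of trace one. -/
def IsState (A : H →L[ℂ] H) : Prop := A.IsPositive ∧ HasTraceOne A

/-- A rank-one orthogonal projection (pure state). -/
def IsRankOneProjection (P : H →L[ℂ] H) : Prop :=
  IsIdempotentElem P ∧ IsSelfAdjoint P ∧ Module.finrank ℂ (LinearMap.range (P : H →ₗ[ℂ] H)) = 1

/-- The strength of the effect `T` along `P`: `sup { t ∈ [0,1] : t • P ≤ T }`. -/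
noncomputable def strength (T P : H →L[ℂ] H) : ℝ :=
  sSup {t : ℝ | t ∈ Set.Icc (0:ℝ) 1 ∧ t • P ≤ T}

/-- The positive square root of a positive operator. -/
noncomputable def opSqrt (A : H →L[ℂ] H) : H →L[ℂ] H := CFC.sqrt A

/-- Rank-one Douglas lemma: if `‖⟪φ, x⟫‖² ≤ C‖Sx‖²` for all `x` and `S` is self-adjoint,
then `φ` is in the range of `S`. -/
lemma exists_eq_of_inner_sq_le (S : H →L[ℂ] H) (hS : IsSelfAdjoint S) (φ : H)
    (C : ℝ) (hC : 0 ≤ C) (h : ∀ x : H, ‖⟪φ, x⟫_ℂ‖ ^ 2 ≤ C * ‖S x‖ ^ 2) :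
    ∃ ψ : H, S ψ = φ := by
  set Sl : H →ₗ[ℂ] H := (S : H →ₗ[ℂ] H) with hSl
  have hker : LinearMap.ker Sl ≤ LinearMap.ker ((innerSL ℂ φ).toLinearMap) := by
    intro x hx
    have hx' : S x = 0 := hx
    have := h x
    rw [hx'] at this
    simp only [norm_zero] at this
    have : ‖⟪φ, x⟫_ℂ‖ = 0 := by nlinarith [norm_nonneg (⟪φ, x⟫_ℂ)]
    simpa [norm_eq_zero] using this
  set f : ↥(LinearMap.range Sl) →ₗ[ℂ] ℂ :=
    ((LinearMap.ker Sl).liftQ ((innerSL ℂ φ).toLinearMap) hker) ∘ₗ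
      (LinearMap.quotKerEquivRange Sl).symm.toLinearMap with hf
  have hfS : ∀ x : H, f ⟨Sl x, LinearMap.mem_range_self Sl x⟩ = ⟪φ, x⟫_ℂ := by
    intro x
    have h1 : (LinearMap.quotKerEquivRange Sl) (Submodule.Quotient.mk x) =
        ⟨Sl x, LinearMap.mem_range_self Sl x⟩ := by
      ext
      simp [LinearMap.quotKerEquivRange_apply_mk]
    have h2 : (LinearMap.quotKerEquivRange Sl).symm ⟨Sl x, LinearMap.mem_range_self Sl x⟩ =
        Submodule.Quotient.mk x := by
      rw [← h1, LinearEquiv.symm_apply_apply]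
    simp [hf, h2]
  have hbound : ∀ y : ↥(LinearMap.range Sl), ‖f y‖ ≤ Real.sqrt C * ‖(y : H)‖ := by
    rintro ⟨y, hy⟩
    obtain ⟨x, rfl⟩ := hy
    rw [hfS x]
    have h1 : ‖⟪φ, x⟫_ℂ‖ ^ 2 ≤ C * ‖S x‖ ^ 2 := h x
    have h2 : ‖⟪φ, x⟫_ℂ‖ ≤ Real.sqrt (C * ‖S x‖ ^ 2) := by
      rw [← Real.sqrt_sq (norm_nonneg (⟪φ, x⟫_ℂ))]
      exact Real.sqrt_le_sqrt h1
    calc ‖⟪φ, x⟫_ℂ‖ ≤ Real.sqrt (C * ‖S x‖ ^ 2) := h2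
      _ = Real.sqrt C * ‖S x‖ := by
          rw [Real.sqrt_mul hC, Real.sqrt_sq (norm_nonneg _)]
  set g₀ : ↥(LinearMap.range Sl) →L[ℂ] ℂ := f.mkContinuous (Real.sqrt C) hbound with hg₀
  obtain ⟨g, hg, -⟩ := exists_extension_norm_eq (LinearMap.range Sl) g₀
  obtain ⟨ψ, hψ⟩ := (InnerProductSpace.toDual ℂ H).surjective g
  refine ⟨ψ, ?_⟩
  apply ext_inner_right ℂ
  intro v
  have hsym : ⟪S ψ, v⟫_ℂ = ⟪ψ, S v⟫_ℂ :=
    ((ContinuousLinearMap.isSelfAdjoint_iff_isSymmetric.mp hS) ψ v)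
  have hgv : ⟪ψ, S v⟫_ℂ = g (S v) := by
    rw [← hψ]; simp [InnerProductSpace.toDual_apply_apply]
  have : g (S v) = ⟪φ, v⟫_ℂ := by
    have h1 := hg ⟨Sl v, LinearMap.mem_range_self Sl v⟩
    have h2 : g₀ ⟨Sl v, LinearMap.mem_range_self Sl v⟩ = ⟪φ, v⟫_ℂ := by
      rw [hg₀]; exact hfS v
    rw [← h2, ← h1]
    rfl
  rw [hsym, hgv, this]

set_option maxHeartbeats 1000000 in
set_option synthInstance.maxHeartbeats 200000 in
theorem strength_eq_zero_iff_not_mem_range_sqrt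
    (A : H →L[ℂ] H) (hA : IsState A) (φ : H) (hφ : ‖φ‖ = 1)
    (P : H →L[ℂ] H) (hP : IsRankOneProjection P)
    (hPφ : LinearMap.range (P : H →ₗ[ℂ] H) = Submodule.span ℂ {φ}) :
    strength A P = 0 ↔ φ ∉ Set.range (opSqrt A) := by
  obtain ⟨hApos, -⟩ := hA
  obtain ⟨hPidem, hPsa, -⟩ := hP
  set S := opSqrt A with hSdef
  have hA0 : (0 : H →L[ℂ] H) ≤ A := (ContinuousLinearMap.nonneg_iff_isPositive A).mpr hApos
  have hS0 : (0 : H →L[ℂ] H) ≤ S := CFC.sqrt_nonneg A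
  have hSpos : S.IsPositive := (ContinuousLinearMap.nonneg_iff_isPositive S).mp hS0
  have hSsa : IsSelfAdjoint S := hSpos.isSelfAdjoint
  have hSS : S * S = A := CFC.sqrt_mul_sqrt_self A hA0
  have hSsym := ContinuousLinearMap.isSelfAdjoint_iff_isSymmetric.mp hSsa
  have hPsym := ContinuousLinearMap.isSelfAdjoint_iff_isSymmetric.mp hPsa
  have hSip : ∀ x y : H, ⟪S x, y⟫_ℂ = ⟪x, S y⟫_ℂ := fun x y => hSsym x y
  have hPip : ∀ x y : H, ⟪P x, y⟫_ℂ = ⟪x, P y⟫_ℂ := fun x y => hPsym x y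
  -- ⟪x, A x⟫ = ‖S x‖²
  have hAinner : ∀ x : H, RCLike.re ⟪x, A x⟫_ℂ = ‖S x‖ ^ 2 := by
    intro x
    have h1 : A x = S (S x) := by rw [← hSS]; rfl
    rw [h1, ← hSip x (S x)]
    exact inner_self_eq_norm_sq (S x)
  -- P φ = φ
  have hPfix : P φ = φ := by
    have hmem : φ ∈ LinearMap.range (P : H →ₗ[ℂ] H) := hPφ ▸ Submodule.mem_span_singleton_self φ
    obtain ⟨y, hy⟩ := hmem
    rw [← hy]; exact congrArg (fun Q : H →L[ℂ] H => Q y) hPidem.eq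
  -- P x = ⟪φ, x⟫ • φ
  have hPapply : ∀ x : H, P x = ⟪φ, x⟫_ℂ • φ := by
    intro x
    have hmem : P x ∈ Submodule.span ℂ {φ} := hPφ ▸ LinearMap.mem_range_self (P : H →ₗ[ℂ] H) x
    obtain ⟨c, hc⟩ := Submodule.mem_span_singleton.mp hmem
    have hφφ : ⟪φ, φ⟫_ℂ = 1 := by
      rw [inner_self_eq_norm_sq_to_K, hφ]; norm_num
    have h1 : ⟪φ, P x⟫_ℂ = ⟪φ, x⟫_ℂ := by
      rw [← hPip φ x, hPfix]
    have h2 : ⟪φ, P x⟫_ℂ = c := by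
      rw [← hc, inner_smul_right, hφφ, mul_one]
    rw [← hc, ← h2, h1]
  -- re ⟪x, P x⟫ = ‖⟪φ, x⟫‖²
  have hPinner : ∀ x : H, RCLike.re ⟪x, P x⟫_ℂ = ‖⟪φ, x⟫_ℂ‖ ^ 2 := by
    intro x
    rw [hPapply x, inner_smul_right, ← inner_conj_symm x φ, RCLike.mul_conj]
    norm_cast
  have hdiff : ∀ (t : ℝ) (x : H), RCLike.re ⟪x, (A - t • P) x⟫_ℂ
      = ‖S x‖ ^ 2 - t * ‖⟪φ, x⟫_ℂ‖ ^ 2 := by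
    intro t x
    have hts : (t • P) x = (t : ℂ) • P x := by
      rw [ContinuousLinearMap.smul_apply]
      exact RCLike.real_smul_eq_coe_smul (K := ℂ) t (P x)
    rw [ContinuousLinearMap.sub_apply, inner_sub_right, map_sub, hAinner x, hts,
      inner_smul_right]
    have hre : RCLike.re ((t : ℂ) * ⟪x, P x⟫_ℂ) = t * RCLike.re ⟪x, P x⟫_ℂ := by
      simp [Complex.re_ofReal_mul]
    rw [hre, hPinner x]
  -- extraction of the inequality from the operator order
  have hle : ∀ t : ℝ, t • P ≤ A → ∀ x : H, t * ‖⟪φ, x⟫_ℂ‖ ^ 2 ≤ ‖S x‖ ^ 2 := by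
    intro t ht x
    have h0 := ((ContinuousLinearMap.le_def _ _).mp ht).re_inner_nonneg_right x
    rw [hdiff t x] at h0
    linarith
  -- building the operator order from the inequality
  have hge : ∀ t : ℝ, 0 ≤ t → (∀ x : H, t * ‖⟪φ, x⟫_ℂ‖ ^ 2 ≤ ‖S x‖ ^ 2) → t • P ≤ A := by
    intro t ht h
    rw [ContinuousLinearMap.le_def]
    have hsmul : t • P = (t : ℂ) • P := by
      ext x
      rw [ContinuousLinearMap.smul_apply, ContinuousLinearMap.smul_apply]
      exact RCLike.real_smul_eq_coe_smul (K := ℂ) t (P x)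
    constructor
    · refine ContinuousLinearMap.isSelfAdjoint_iff_isSymmetric.mp (hApos.isSelfAdjoint.sub ?_)
      rw [hsmul]
      exact (IsSelfAdjoint.smul (by simp [IsSelfAdjoint, RCLike.star_def]) hPsa)
    · intro x
      have h2 : (0:ℝ) ≤ RCLike.re ⟪x, (A - t • P) x⟫_ℂ := by
        rw [hdiff t x]; linarith [h x]
      rw [ContinuousLinearMap.reApplyInnerSelf_apply, inner_re_symm]
      exact h2
  have hzero_mem : (0:ℝ) ∈ {t : ℝ | t ∈ Set.Icc (0:ℝ) 1 ∧ t • P ≤ A} := by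
    refine ⟨⟨le_refl 0, zero_le_one⟩, ?_⟩
    rw [zero_smul]
    exact hA0
  have hbdd : BddAbove {t : ℝ | t ∈ Set.Icc (0:ℝ) 1 ∧ t • P ≤ A} :=
    ⟨1, fun s hs => hs.1.2⟩
  constructor
  · -- strength = 0 → φ ∉ range S
    intro h0 hmem
    obtain ⟨ψ, hψ⟩ := hmem
    have hψ0 : ψ ≠ 0 := by
      rintro rfl
      rw [map_zero] at hψ
      rw [← hψ] at hφ
      simp at hφ
    have hψn : (0:ℝ) < ‖ψ‖ ^ 2 := pow_pos (norm_pos_iff.mpr hψ0) 2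
    set t : ℝ := min 1 (‖ψ‖ ^ 2)⁻¹ with htdef
    have ht0 : 0 < t := lt_min one_pos (inv_pos.mpr hψn)
    have htmem : t ∈ {t : ℝ | t ∈ Set.Icc (0:ℝ) 1 ∧ t • P ≤ A} := by
      refine ⟨⟨le_of_lt ht0, min_le_left _ _⟩, ?_⟩
      refine hge t (le_of_lt ht0) fun x => ?_
      have hb : ‖⟪φ, x⟫_ℂ‖ ≤ ‖ψ‖ * ‖S x‖ := by
        have h1 : ⟪φ, x⟫_ℂ = ⟪ψ, S x⟫_ℂ := by
          rw [← hSip ψ x]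
          exact congrArg (fun z => ⟪z, x⟫_ℂ) hψ.symm
        rw [h1]
        exact norm_inner_le_norm ψ (S x)
      have htle : t ≤ (‖ψ‖ ^ 2)⁻¹ := min_le_right _ _
      have hsq : ‖⟪φ, x⟫_ℂ‖ ^ 2 ≤ ‖ψ‖ ^ 2 * ‖S x‖ ^ 2 := by
        nlinarith [norm_nonneg (⟪φ, x⟫_ℂ), norm_nonneg ψ, norm_nonneg (S x)]
      calc t * ‖⟪φ, x⟫_ℂ‖ ^ 2 ≤ (‖ψ‖ ^ 2)⁻¹ * (‖ψ‖ ^ 2 * ‖S x‖ ^ 2) := by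
            nlinarith [norm_nonneg (⟪φ, x⟫_ℂ), sq_nonneg ‖⟪φ, x⟫_ℂ‖]
        _ = ‖S x‖ ^ 2 := by field_simp
    have := le_csSup hbdd htmem
    rw [strength] at h0
    linarith
  · -- φ ∉ range S → strength = 0
    intro hmem
    rw [strength]
    apply le_antisymm
    · refine csSup_le ⟨0, hzero_mem⟩ fun t ht => ?_
      by_contra hcon
      push_neg at hcon
      have ht0 : 0 < t := hcon
      have hineq : ∀ x : H, ‖⟪φ, x⟫_ℂ‖ ^ 2 ≤ t⁻¹ * ‖S x‖ ^ 2 := by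
        intro x
        have := hle t ht.2 x
        rw [← mul_le_mul_iff_right₀ ht0]
        calc t * ‖⟪φ, x⟫_ℂ‖ ^ 2 ≤ ‖S x‖ ^ 2 := this
          _ = t * (t⁻¹ * ‖S x‖ ^ 2) := by field_simp
      obtain ⟨ψ, hψ⟩ := exists_eq_of_inner_sq_le S hSsa φ t⁻¹ (by positivity) hineq
      exact hmem ⟨ψ, hψ⟩
    · exact le_csSup hbdd hzero_mem
end

section
/- Let P, Q be rank-one orthogonal projections on a complex Hilbert space H with PQ = 0, let 0 < λ < μ < 1 with λ + μ = 1, and set A = λP + μQ. Then for every rank-one projection R with range contained in range(A), the strength satisfies λ ≤ λ(A,R) ≤ μ, where λ(A,R) = sup { t ∈ [0,1] : t·R ≤ A }. -/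
open scoped InnerProductSpace

set_option linter.unusedSectionVars false
set_option maxHeartbeats 800000
variable {H : Type*} [NormedAddCommGroup H] [InnerProductSpace ℂ H] [CompleteSpace H]

lemma re_smul_left (r : ℝ) (y x : H) :
    RCLike.re (⟪r • y, x⟫_ℂ) = r * RCLike.re (⟪y, x⟫_ℂ) := by
  rw [RCLike.real_smul_eq_coe_smul (K := ℂ), inner_smul_left]
  simp [RCLike.conj_ofReal]

lemma idem_apply {T : H →L[ℂ] H} (h1 : IsIdempotentElem T) (x : H) : T (T x) = T x := by
  conv_rhs => rw [← h1.eq]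
  rfl

lemma proj_re {T : H →L[ℂ] H} (h1 : IsIdempotentElem T) (h2 : IsSelfAdjoint T) (x : H) :
    RCLike.re (⟪T x, x⟫_ℂ) = ‖T x‖ ^ 2 := by
  have hs := h2.isSymmetric
  have h : ⟪T x, x⟫_ℂ = ⟪T x, T x⟫_ℂ := by
    conv_lhs => rw [← idem_apply h1 x]
    exact hs (T x) x
  rw [h, inner_self_eq_norm_sq]

theorem strength_between (P Q : H →L[ℂ] H)
    (hP : IsRankOneProjection P) (hQ : IsRankOneProjection Q) (hPQ : P ∘L Q = 0)
    (l m : ℝ) (hl : 0 < l) (hlm : l < m) (hm : m < 1) (hsum : l + m = 1)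
    (A : H →L[ℂ] H) (hA : A = l • P + m • Q)
    (R : H →L[ℂ] H) (hR : IsRankOneProjection R)
    (hRA : LinearMap.range (R : H →ₗ[ℂ] H) ≤ LinearMap.range (A : H →ₗ[ℂ] H)) :
    l ≤ strength A R ∧ strength A R ≤ m := by
  obtain ⟨hPi, hPs, hPr⟩ := hP
  obtain ⟨hQi, hQs, hQr⟩ := hQ
  obtain ⟨hRi, hRs, hRr⟩ := hR
  subst hA
  have hPQ' : P * Q = 0 := hPQ
  have hQP : Q * P = 0 := by
    have : star (P * Q) = (0 : H →L[ℂ] H) := by rw [hPQ', star_zero]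
    rwa [star_mul, hQs.star_eq, hPs.star_eq] at this
  have hQPx : ∀ x, Q (P x) = 0 := fun x => by
    simpa using ContinuousLinearMap.ext_iff.1 hQP x
  have hPQx : ∀ x, P (Q x) = 0 := fun x => by
    simpa using ContinuousLinearMap.ext_iff.1 hPQ' x
  set E : H →L[ℂ] H := P + Q with hE
  have hEi : IsIdempotentElem E := by
    unfold IsIdempotentElem
    rw [hE, mul_add, add_mul, add_mul, hPi.eq, hQi.eq, hPQ', hQP]
    abel
  have hEs : IsSelfAdjoint E := hPs.add hQs
  -- E fixes the range of A, hence fixes R x for all x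
  have hRfix : ∀ x, E (R x) = R x := by
    intro x
    obtain ⟨y, hy⟩ := hRA (LinearMap.mem_range.2 ⟨x, rfl⟩)
    have hy' : (l • P + m • Q) y = R x := hy
    rw [← hy']
    simp only [hE, ContinuousLinearMap.add_apply, ContinuousLinearMap.smul_apply,
      map_add, ContinuousLinearMap.map_smul_of_tower]
    rw [idem_apply hPi, idem_apply hQi, hQPx, hPQx]
    simp
  -- norms of P x, Q x, E x
  have hEsq : ∀ x : H, ‖E x‖ ^ 2 = ‖P x‖ ^ 2 + ‖Q x‖ ^ 2 := by
    intro x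
    rw [← proj_re hEi hEs x]
    simp only [hE, ContinuousLinearMap.add_apply, inner_add_left, map_add]
    rw [proj_re hPi hPs, proj_re hQi hQs]
  have hEle : ∀ x : H, ‖E x‖ ^ 2 ≤ ‖x‖ ^ 2 := by
    intro x
    have h1 : RCLike.re (⟪E x, x⟫_ℂ) = ‖E x‖ ^ 2 := proj_re hEi hEs x
    have h2 : RCLike.re (⟪E x, x⟫_ℂ) ≤ ‖E x‖ * ‖x‖ := by
      calc RCLike.re (⟪E x, x⟫_ℂ) ≤ ‖(⟪E x, x⟫_ℂ)‖ := RCLike.re_le_norm _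
        _ ≤ ‖E x‖ * ‖x‖ := norm_inner_le_norm _ _
    nlinarith [norm_nonneg (E x), norm_nonneg x, sq_nonneg (‖E x‖ - ‖x‖)]
  -- key inequality : ‖R x‖² ≤ ‖P x‖² + ‖Q x‖²
  have key : ∀ x : H, ‖R x‖ ^ 2 ≤ ‖P x‖ ^ 2 + ‖Q x‖ ^ 2 := by
    intro x
    have h1 : RCLike.re (⟪R x, x⟫_ℂ) = ‖R x‖ ^ 2 := proj_re hRi hRs x
    have h2 : ⟪R x, x⟫_ℂ = ⟪R x, E x⟫_ℂ := by
      conv_lhs => rw [← hRfix x]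
      exact hEs.isSymmetric (R x) x
    have h3 : RCLike.re (⟪R x, E x⟫_ℂ) ≤ ‖R x‖ * ‖E x‖ := by
      calc RCLike.re (⟪R x, E x⟫_ℂ) ≤ ‖(⟪R x, E x⟫_ℂ)‖ := RCLike.re_le_norm _
        _ ≤ ‖R x‖ * ‖E x‖ := norm_inner_le_norm _ _
    have h4 : ‖R x‖ ^ 2 ≤ ‖R x‖ * ‖E x‖ := by rw [← h1, h2]; exact h3
    have h5 : ‖R x‖ ^ 2 ≤ ‖E x‖ ^ 2 := by
      nlinarith [norm_nonneg (R x), norm_nonneg (E x), sq_nonneg (‖R x‖ - ‖E x‖)]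
    rw [← hEsq x]; exact h5
  -- expansion of the quadratic form of (l•P + m•Q) - t•R
  have hexp : ∀ (t : ℝ) (x : H),
      RCLike.re (⟪((l • P + m • Q) - t • R) x, x⟫_ℂ)
        = l * ‖P x‖ ^ 2 + m * ‖Q x‖ ^ 2 - t * ‖R x‖ ^ 2 := by
    intro t x
    simp only [ContinuousLinearMap.sub_apply, ContinuousLinearMap.add_apply,
      ContinuousLinearMap.smul_apply, inner_sub_left, inner_add_left, map_sub, map_add]
    rw [re_smul_left, re_smul_left, re_smul_left, proj_re hPi hPs, proj_re hQi hQs,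
      proj_re hRi hRs]
  constructor
  · -- lower bound
    have hmem : l ∈ {t : ℝ | t ∈ Set.Icc (0:ℝ) 1 ∧ t • R ≤ l • P + m • Q} := by
      refine ⟨⟨hl.le, (hlm.trans hm).le⟩, ?_⟩
      rw [ContinuousLinearMap.le_def]
      constructor
      · exact (((IsSelfAdjoint.all l).smul hPs).add ((IsSelfAdjoint.all m).smul hQs)).sub
          ((IsSelfAdjoint.all l).smul hRs) |>.isSymmetric
      · intro x
        rw [ContinuousLinearMap.reApplyInnerSelf_apply, hexp l x]
        nlinarith [key x, sq_nonneg (‖Q x‖)]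
    have hbdd : BddAbove {t : ℝ | t ∈ Set.Icc (0:ℝ) 1 ∧ t • R ≤ l • P + m • Q} :=
      ⟨1, fun t ht => ht.1.2⟩
    exact le_csSup hbdd hmem
  · -- upper bound
    apply Real.sSup_le
    · rintro t ⟨⟨ht0, ht1⟩, htR⟩
      -- find a unit vector fixed by R
      have hne : LinearMap.range (R : H →ₗ[ℂ] H) ≠ (⊥ : Submodule ℂ H) := by
        intro h
        rw [h] at hRr
        simp at hRr
      obtain ⟨v, hvmem, hv0⟩ := (Submodule.ne_bot_iff _).mp hne
      obtain ⟨u, hu⟩ := LinearMap.mem_range.1 hvmem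
      have hRv : R v = v := by rw [← hu]; exact idem_apply hRi u
      set r : H := (‖v‖ : ℝ)⁻¹ • v with hr
      have hrn : ‖r‖ = 1 := by
        rw [hr, norm_smul, norm_inv, norm_norm, inv_mul_cancel₀ (norm_ne_zero_iff.2 hv0)]
      have hRr' : R r = r := by
        rw [hr, ContinuousLinearMap.map_smul_of_tower, hRv]
      have hpos : ((l • P + m • Q) - t • R).IsPositive :=
        (ContinuousLinearMap.le_def _ _).mp htR
      have h0 := hpos.2 r
      rw [ContinuousLinearMap.reApplyInnerSelf_apply, hexp t r] at h0
      have hR1 : ‖R r‖ ^ 2 = 1 := by rw [hRr', hrn]; norm_num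
      have hPQle : ‖P r‖ ^ 2 + ‖Q r‖ ^ 2 ≤ 1 := by
        have := hEle r
        rw [hEsq r, hrn] at this
        simpa using this
      nlinarith [sq_nonneg (‖P r‖), sq_nonneg (‖Q r‖)]
    · exact (hl.trans hlm).le
end

section
/- Let P, Q be orthogonal rank-one projections on a complex Hilbert space, 0 < λ < μ, λ + μ = 1, and A = λP + μQ. For every rank-one projection R whose range lies in range(A), the strength satisfies λ(A,R) = λμ / ((μ − λ)·tr(PR) + λ), where λ(A,R) = sup { t ∈ [0,1] : t·R ≤ A }. -/
open scoped InnerProductSpace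

variable {H : Type*} [NormedAddCommGroup H] [InnerProductSpace ℂ H] [CompleteSpace H]

/-- A selfadjoint idempotent whose range is spanned by the unit vector `v` acts as
`x ↦ ⟪v, x⟫ • v`. -/
lemma repr_of_span (T : H →L[ℂ] H) (h1 : IsIdempotentElem T) (h2 : IsSelfAdjoint T)
    (v : H) (hv : ‖v‖ = 1) (hsp : LinearMap.range (T : H →ₗ[ℂ] H) = Submodule.span ℂ {v}) :
    ∀ x, T x = ⟪v, x⟫_ℂ • v := by
  have hsymm := ContinuousLinearMap.isSelfAdjoint_iff_isSymmetric.mp h2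
  have hfix : ∀ y ∈ LinearMap.range (T : H →ₗ[ℂ] H), T y = y := by
    rintro y ⟨z, rfl⟩
    have := congrArg (fun S : H →L[ℂ] H => S z) h1
    simpa [ContinuousLinearMap.mul_apply] using this
  have hvmem : v ∈ LinearMap.range (T : H →ₗ[ℂ] H) := by
    rw [hsp]; exact Submodule.mem_span_singleton_self v
  have hTv : T v = v := hfix v hvmem
  have hvv : ⟪v, v⟫_ℂ = 1 := by
    rw [inner_self_eq_norm_sq_to_K, hv]; norm_num
  intro x
  have hmem : T x ∈ Submodule.span ℂ {v} := by
    rw [← hsp]; exact LinearMap.mem_range_self _ x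
  obtain ⟨c, hc⟩ := Submodule.mem_span_singleton.mp hmem
  have hcval : ⟪v, T x⟫_ℂ = c := by
    rw [← hc, inner_smul_right, hvv, mul_one]
  have h5 : ⟪T v, x⟫_ℂ = ⟪v, T x⟫_ℂ := hsymm v x
  rw [hTv] at h5
  rw [← hc, ← hcval, ← h5]

/-- A rank-one projection has a unit vector spanning its range. -/
lemma exists_unit_span (T : H →L[ℂ] H) (hT : IsRankOneProjection T) :
    ∃ v : H, ‖v‖ = 1 ∧ LinearMap.range (T : H →ₗ[ℂ] H) = Submodule.span ℂ {v} := by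
  obtain ⟨h1, h2, h3⟩ := hT
  obtain ⟨v, hv0, hvspan⟩ := finrank_eq_one_iff'.mp h3
  have hv0' : (v : H) ≠ 0 := fun h => hv0 (Subtype.ext h)
  have hvn : ‖(v : H)‖ ≠ 0 := norm_ne_zero_iff.mpr hv0'
  refine ⟨((‖(v : H)‖⁻¹ : ℝ) : ℂ) • (v : H), ?_, ?_⟩
  · rw [norm_smul, Complex.norm_real, Real.norm_eq_abs, abs_of_pos (by positivity),
      inv_mul_cancel₀ hvn]
  · apply le_antisymm
    · rintro y ⟨z, rfl⟩
      obtain ⟨c, hc⟩ := hvspan ⟨T z, LinearMap.mem_range_self _ z⟩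
      have hc' : c • (v : H) = T z := congrArg Subtype.val hc
      rw [ContinuousLinearMap.coe_coe, ← hc']
      have hcoef : (‖(v : H)‖ : ℂ) * ((‖(v : H)‖⁻¹ : ℝ) : ℂ) = 1 := by
        rw [← Complex.ofReal_mul, mul_inv_cancel₀ hvn, Complex.ofReal_one]
      have : c • (v : H) = (c * (‖(v : H)‖ : ℂ)) • (((‖(v : H)‖⁻¹ : ℝ) : ℂ) • (v : H)) := by
        rw [smul_smul, mul_assoc, hcoef, mul_one]
      rw [this]
      exact Submodule.smul_mem _ _ (Submodule.mem_span_singleton_self _)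
    · rw [Submodule.span_singleton_le_iff_mem]
      exact Submodule.smul_mem _ _ v.2

lemma aux_cauchy (l m X Y U V W c d : ℝ) (hl : 0 < l) (hm : 0 < m)
    (hd : d = m * X ^ 2 + l * Y ^ 2) (hd_pos : 0 < d) (hc : c = l * m / d) (hc0 : 0 ≤ c)
    (hW0 : 0 ≤ W) (hWle : W ≤ X * U + Y * V) :
    c * W ^ 2 ≤ l * U ^ 2 + m * V ^ 2 := by
  subst hd
  have key : l * m * (X * U + Y * V) ^ 2 ≤ (m * X ^ 2 + l * Y ^ 2) * (l * U ^ 2 + m * V ^ 2) := by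
    nlinarith [sq_nonneg (m * X * V - l * Y * U)]
  have h1 : W ^ 2 ≤ (X * U + Y * V) ^ 2 := pow_le_pow_left₀ hW0 hWle 2
  have h2 : c * W ^ 2 ≤ c * (X * U + Y * V) ^ 2 := mul_le_mul_of_nonneg_left h1 hc0
  have h4 : c * (X * U + Y * V) ^ 2 ≤ l * U ^ 2 + m * V ^ 2 := by
    rw [hc, div_mul_eq_mul_div, div_le_iff₀ hd_pos]
    nlinarith [key]
  linarith

theorem strength_formula (P Q : H →L[ℂ] H)
    (hP : IsRankOneProjection P) (hQ : IsRankOneProjection Q) (hPQ : P ∘L Q = 0)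
    (l m : ℝ) (hl : 0 < l) (hlm : l < m) (hsum : l + m = 1)
    (A : H →L[ℂ] H) (hA : A = l • P + m • Q)
    (p : H) (hp : ‖p‖ = 1) (hpP : LinearMap.range (P : H →ₗ[ℂ] H) = Submodule.span ℂ {p})
    (R : H →L[ℂ] H) (hR : IsRankOneProjection R)
    (hRA : LinearMap.range (R : H →ₗ[ℂ] H) ≤ LinearMap.range (A : H →ₗ[ℂ] H)) :
    -- `tr (P * R) = re ⟪p, R p⟫` for the unit vector `p` spanning the range of `P`
    strength A R = l * m / ((m - l) * RCLike.re ⟪p, R p⟫_ℂ + l) := by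
  have hm : 0 < m := hl.trans hlm
  have hm1 : m < 1 := by linarith
  -- pointwise formulas for P, Q, R
  obtain ⟨q, hq, hqQ⟩ := exists_unit_span Q hQ
  obtain ⟨r, hr, hrR⟩ := exists_unit_span R hR
  have hPapp := repr_of_span P hP.1 hP.2.1 p hp hpP
  have hQapp := repr_of_span Q hQ.1 hQ.2.1 q hq hqQ
  have hRapp := repr_of_span R hR.1 hR.2.1 r hr hrR
  have hpp : ⟪p, p⟫_ℂ = 1 := by rw [inner_self_eq_norm_sq_to_K, hp]; norm_num
  have hqq : ⟪q, q⟫_ℂ = 1 := by rw [inner_self_eq_norm_sq_to_K, hq]; norm_num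
  have hrr : ⟪r, r⟫_ℂ = 1 := by rw [inner_self_eq_norm_sq_to_K, hr]; norm_num
  -- orthogonality of p and q
  have hpq : ⟪p, q⟫_ℂ = 0 := by
    have h0 : (P ∘L Q) p = 0 := by rw [hPQ]; rfl
    have : (⟪q, p⟫_ℂ * ⟪p, q⟫_ℂ) • p = 0 := by
      have := h0
      rw [ContinuousLinearMap.comp_apply, hQapp, map_smul, hPapp, smul_smul] at this
      exact this
    have hp0 : p ≠ 0 := by intro h; rw [h] at hp; simp at hp
    have hmul : ⟪q, p⟫_ℂ * ⟪p, q⟫_ℂ = 0 := by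
      by_contra hne
      exact hp0 (by simpa [hne] using (smul_eq_zero.mp this).resolve_left hne)
    rcases mul_eq_zero.mp hmul with h | h
    · rw [← inner_conj_symm p q, h, map_zero]
    · exact h
  have hqp : ⟪q, p⟫_ℂ = 0 := by rw [← inner_conj_symm q p, hpq, map_zero]
  -- r lies in the span of p and q
  have hrmem : r ∈ LinearMap.range (A : H →ₗ[ℂ] H) := by
    apply hRA
    refine ⟨r, ?_⟩
    rw [ContinuousLinearMap.coe_coe, hRapp, hrr, one_smul]
  obtain ⟨y, hy⟩ := hrmem
  set a : ℂ := ⟪p, r⟫_ℂ with ha_def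
  set b : ℂ := ⟪q, r⟫_ℂ with hb_def
  have hrdec : r = a • p + b • q := by
    have hyr : r = ((l : ℂ) * ⟪p, y⟫_ℂ) • p + ((m : ℂ) * ⟪q, y⟫_ℂ) • q := by
      rw [← hy, hA]
      simp only [ContinuousLinearMap.coe_coe, ContinuousLinearMap.add_apply, ContinuousLinearMap.smul_apply, hPapp, hQapp,
        ← smul_assoc, smul_eq_mul, Complex.real_smul]
    have ha : a = (l : ℂ) * ⟪p, y⟫_ℂ := by
      rw [ha_def]
      conv_lhs => rw [hyr]
      rw [inner_add_right, inner_smul_right, inner_smul_right, hpp, hpq]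
      ring
    have hb : b = (m : ℂ) * ⟪q, y⟫_ℂ := by
      rw [hb_def]
      conv_lhs => rw [hyr]
      rw [inner_add_right, inner_smul_right, inner_smul_right, hqq, hqp]
      ring
    rw [ha, hb]; exact hyr
  set X : ℝ := ‖a‖ with hX_def
  set Y : ℝ := ‖b‖ with hY_def
  have hXY : X ^ 2 + Y ^ 2 = 1 := by
    have h1 : ⟪r, r⟫_ℂ = ((X ^ 2 + Y ^ 2 : ℝ) : ℂ) := by
      conv_lhs => rw [hrdec]
      rw [inner_add_left, inner_add_right, inner_add_right]
      simp only [inner_smul_left, inner_smul_right, hpp, hqq, hpq, hqp,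
        mul_zero, mul_one, add_zero, zero_add]
      rw [mul_comm a ((starRingEnd ℂ) a), mul_comm b ((starRingEnd ℂ) b),
        Complex.conj_mul', Complex.conj_mul', ← hX_def, ← hY_def]
      push_cast
      ring
    rw [hrr] at h1
    exact_mod_cast h1.symm
  -- the trace term
  have hα : RCLike.re ⟪p, R p⟫_ℂ = X ^ 2 := by
    rw [hRapp, inner_smul_right]
    have hconj : ⟪r, p⟫_ℂ = (starRingEnd ℂ) a := by rw [ha_def, inner_conj_symm]
    rw [hconj, Complex.conj_mul', ← hX_def, ← Complex.ofReal_pow]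
    exact Complex.ofReal_re _
  rw [hα]
  clear_value X Y
  set d : ℝ := (m - l) * X ^ 2 + l with hd_def
  have hd_eq : d = m * X ^ 2 + l * Y ^ 2 := by rw [hd_def]; nlinarith [hXY]
  have hd_pos : 0 < d := by nlinarith [sq_nonneg X, sq_nonneg Y]
  clear_value d
  set c : ℝ := l * m / d with hc_def
  have hcd : c * d = l * m := by
    rw [hc_def, div_mul_cancel₀ _ hd_pos.ne']
  have hc_pos : 0 < c := by
    rw [hc_def]; positivity
  have hc_le1 : c ≤ 1 := by
    rw [hc_def, div_le_one hd_pos]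
    nlinarith [sq_nonneg X, sq_nonneg Y]
  clear_value c
  -- the order criterion
  have hval : ∀ (t : ℝ) (x : H), ⟪(A - t • R) x, x⟫_ℂ =
      ((l * ‖⟪p, x⟫_ℂ‖ ^ 2 + m * ‖⟪q, x⟫_ℂ‖ ^ 2 - t * ‖⟪r, x⟫_ℂ‖ ^ 2 : ℝ) : ℂ) := by
    intro t x
    have hax : (A - t • R) x =
        ((l : ℂ) * ⟪p, x⟫_ℂ) • p + ((m : ℂ) * ⟪q, x⟫_ℂ) • q - ((t : ℂ) * ⟪r, x⟫_ℂ) • r := by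
      rw [hA]
      simp only [ContinuousLinearMap.sub_apply, ContinuousLinearMap.add_apply,
        ContinuousLinearMap.smul_apply, hPapp, hQapp, hRapp,
        ← smul_assoc, smul_eq_mul, Complex.real_smul]
    rw [hax, inner_sub_left, inner_add_left]
    simp only [inner_smul_left, map_mul, Complex.conj_ofReal, mul_assoc, Complex.conj_mul']
    push_cast
    ring
  have hord : ∀ t : ℝ, t • R ≤ A ↔
      ∀ x : H, t * ‖⟪r, x⟫_ℂ‖ ^ 2 ≤ l * ‖⟪p, x⟫_ℂ‖ ^ 2 + m * ‖⟪q, x⟫_ℂ‖ ^ 2 := by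
    intro t
    rw [ContinuousLinearMap.le_def, ContinuousLinearMap.isPositive_iff_complex]
    refine forall_congr' fun x => ?_
    rw [hval t x]
    simp only [RCLike.re_to_complex, Complex.ofReal_re]
    constructor
    · rintro ⟨-, h⟩; linarith
    · intro h; exact ⟨trivial, by linarith⟩
  -- decomposition of ⟪r, x⟫ for a general x
  have hw : ∀ x : H, ⟪r, x⟫_ℂ = (starRingEnd ℂ) a * ⟪p, x⟫_ℂ + (starRingEnd ℂ) b * ⟪q, x⟫_ℂ := by
    intro x
    conv_lhs => rw [hrdec]
    rw [inner_add_left, inner_smul_left, inner_smul_left]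
  -- membership : c • R ≤ A
  have hc_mem : c ∈ Set.Icc (0:ℝ) 1 ∧ c • R ≤ A := by
    refine ⟨⟨hc_pos.le, hc_le1⟩, (hord c).mpr fun x => ?_⟩
    set U := ‖⟪p, x⟫_ℂ‖ with hU
    set V := ‖⟪q, x⟫_ℂ‖ with hV
    set W := ‖⟪r, x⟫_ℂ‖ with hW
    have hWle : W ≤ X * U + Y * V := by
      rw [hW, hw x]
      refine (norm_add_le _ _).trans (le_of_eq ?_)
      simp only [norm_mul, RCLike.norm_conj, ← hX_def, ← hY_def, ← hU, ← hV]
    have hW0 : 0 ≤ W := norm_nonneg _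
    clear_value U V W
    exact aux_cauchy l m X Y U V W c d hl hm hd_eq hd_pos hc_def hc_pos.le hW0 hWle
  -- upper bound
  have hub : ∀ t ∈ {t : ℝ | t ∈ Set.Icc (0:ℝ) 1 ∧ t • R ≤ A}, t ≤ c := by
    rintro t ⟨⟨ht0, ht1⟩, hle⟩
    set x₀ : H := ((a / (l : ℂ)) • p + (b / (m : ℂ)) • q) with hx₀
    have hux : ⟪p, x₀⟫_ℂ = a / (l : ℂ) := by
      rw [hx₀, inner_add_right, inner_smul_right, inner_smul_right, hpp, hpq]
      ring
    have hvx : ⟪q, x₀⟫_ℂ = b / (m : ℂ) := by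
      rw [hx₀, inner_add_right, inner_smul_right, inner_smul_right, hqq, hqp]
      ring
    set s : ℝ := X ^ 2 / l + Y ^ 2 / m with hs_def
    have hwx : ⟪r, x₀⟫_ℂ = ((s : ℝ) : ℂ) := by
      rw [hw x₀, hux, hvx, mul_div_assoc', mul_div_assoc', Complex.conj_mul', Complex.conj_mul',
        ← hX_def, ← hY_def, hs_def]
      push_cast
      ring
    have hs_pos : 0 < s := by
      have h1 : X ^ 2 / m ≤ X ^ 2 / l :=
        div_le_div_of_nonneg_left (sq_nonneg X) hl hlm.le
      have h2 : X ^ 2 / m + Y ^ 2 / m = 1 / m := by rw [← add_div, hXY]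
      have h3 : 0 < 1 / m := by positivity
      rw [hs_def]; linarith
    have hineq := (hord t).mp hle x₀
    rw [hux, hvx, hwx] at hineq
    have hnr : ‖((s : ℝ) : ℂ)‖ = s := by
      rw [Complex.norm_real, Real.norm_eq_abs, abs_of_pos hs_pos]
    have hnu : ‖a / (l : ℂ)‖ = X / l := by
      rw [norm_div, Complex.norm_real, Real.norm_eq_abs, abs_of_pos hl, ← hX_def]
    have hnv : ‖b / (m : ℂ)‖ = Y / m := by
      rw [norm_div, Complex.norm_real, Real.norm_eq_abs, abs_of_pos hm, ← hY_def]
    rw [hnr, hnu, hnv] at hineq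
    have hrhs : l * (X / l) ^ 2 + m * (Y / m) ^ 2 = s := by
      rw [hs_def]; field_simp
    rw [hrhs] at hineq
    have hden : m * X ^ 2 + l * Y ^ 2 ≠ 0 := by rw [← hd_eq]; exact hd_pos.ne'
    have hsc : s * c = 1 := by
      rw [hc_def, hs_def, hd_eq]
      field_simp
      ring_nf
      rw [← add_mul, mul_inv_cancel₀ (by rw [mul_comm (X ^ 2) m]; exact hden)]
    have hcss : c * s ^ 2 = s := by linear_combination s * hsc
    clear_value s
    have hts : t * s ^ 2 ≤ c * s ^ 2 := by linarith
    exact le_of_mul_le_mul_right hts (pow_pos hs_pos 2)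
  -- conclude
  unfold strength
  apply le_antisymm
  · exact csSup_le ⟨c, hc_mem⟩ hub
  · exact le_csSup ⟨c, fun t ht => hub t ht⟩ hc_mem
end

section
/- Let T₁, T₂ be effects on a complex Hilbert space H. If λ(T₁, P_φ) = λ(T₂, P_φ) for every unit vector φ ∈ H (where λ(T, P_φ) = sup { t ∈ [0,1] : t·P_φ ≤ T }), then T₁ = T₂. -/
open scoped InnerProductSpace
open ContinuousLinearMap RCLike

variable {H : Type*} [NormedAddCommGroup H] [InnerProductSpace ℂ H] [CompleteSpace H]


/-- Cauchy–Schwarz for the semi-inner product induced by a positive operator. -/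
lemma opCS (T : H →L[ℂ] H) (hT : T.IsPositive) (x y : H) :
    ‖⟪T x, y⟫_ℂ‖ ^ 2 ≤ re ⟪T x, x⟫_ℂ * re ⟪T y, y⟫_ℂ := by
  have hsymm := hT.1
  set z := ⟪T x, y⟫_ℂ with hz
  set a := re ⟪T x, x⟫_ℂ with haa
  set b := re ⟪T y, y⟫_ℂ with hbb
  set s := ‖z‖ ^ 2 with hs
  have ha : 0 ≤ a := hT.re_inner_nonneg_left x
  have hb : 0 ≤ b := hT.re_inner_nonneg_left y
  have hs0 : 0 ≤ s := by positivity
  have hc1 : (⟪T x, x⟫_ℂ) = (a : ℂ) := ((isPositive_iff_complex T).mp hT x).1.symm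
  have hc2 : (⟪T y, y⟫_ℂ) = (b : ℂ) := ((isPositive_iff_complex T).mp hT y).1.symm
  have hyx : ⟪T y, x⟫_ℂ = (starRingEnd ℂ) z := by
    rw [hz, ← inner_conj_symm]
    exact congrArg _ (hsymm x y).symm
  have hq : ∀ t : ℝ, 0 ≤ (s * b) * (t * t) + (-2 * s) * t + a := by
    intro t
    have h0 := hT.re_inner_nonneg_left (x + (-(t : ℂ) * (starRingEnd ℂ) z) • y)
    set c : ℂ := -(t : ℂ) * (starRingEnd ℂ) z with hc
    have hexp : ⟪T (x + c • y), x + c • y⟫_ℂ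
        = ((a + (-2 * s) * t + (s * b) * t ^ 2 : ℝ) : ℂ) := by
      rw [map_add, ContinuousLinearMap.map_smul]
      rw [inner_add_left, inner_add_right, inner_add_right, inner_smul_left,
        inner_smul_right, inner_smul_left, inner_smul_right, hc1, hc2, hyx, ← hz]
      have hzz : (starRingEnd ℂ) z * z = (s : ℂ) := by
        rw [RCLike.conj_mul]; norm_cast
      have hcc : (starRingEnd ℂ) c = -(t : ℂ) * z := by
        rw [hc, map_mul, map_neg]
        simp [RCLike.conj_ofReal]
      rw [hcc, hc]
      push_cast
      linear_combination ((t:ℂ)^2*(b:ℂ) - 2*(t:ℂ)) * hzz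
    rw [hexp] at h0
    have h0' : (0:ℝ) ≤ a + -2 * s * t + s * b * t ^ 2 := by simpa [← Complex.ofReal_pow] using h0
    nlinarith [h0']
  have hd := discrim_le_zero hq
  rw [discrim] at hd
  rcases hs0.eq_or_lt with h0 | h0
  · rw [hz, haa, hbb] at *
    nlinarith
  · nlinarith

/-- The rank-one projection onto the span of `φ` (for `‖φ‖ = 1`). -/
noncomputable def rankOneProj (φ : H) : H →L[ℂ] H := (innerSL ℂ φ).smulRight φ

lemma rankOneProj_apply (φ x : H) : rankOneProj φ x = ⟪φ, x⟫_ℂ • φ := rfl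

lemma rankOneProj_isSelfAdjoint (φ : H) : IsSelfAdjoint (rankOneProj φ) := by
  rw [isSelfAdjoint_iff_isSymmetric]
  intro x y
  show ⟪⟪φ, x⟫_ℂ • φ, y⟫_ℂ = ⟪x, ⟪φ, y⟫_ℂ • φ⟫_ℂ
  rw [inner_smul_left, inner_smul_right, inner_conj_symm]
  ring

lemma rankOneProj_range (φ : H) (hφ : ‖φ‖ = 1) :
    LinearMap.range (rankOneProj φ : H →ₗ[ℂ] H) = Submodule.span ℂ {φ} := by
  apply le_antisymm
  · rintro x ⟨y, rfl⟩
    exact Submodule.smul_mem _ _ (Submodule.mem_span_singleton_self φ)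
  · rw [Submodule.span_le, Set.singleton_subset_iff]
    refine ⟨φ, ?_⟩
    show ⟪φ, φ⟫_ℂ • φ = φ
    rw [inner_self_eq_norm_sq_to_K, hφ]
    simp

lemma rankOneProj_isRankOneProjection (φ : H) (hφ : ‖φ‖ = 1) :
    IsRankOneProjection (rankOneProj φ) := by
  refine ⟨?_, rankOneProj_isSelfAdjoint φ, ?_⟩
  · ext x
    show rankOneProj φ (rankOneProj φ x) = rankOneProj φ x
    simp [rankOneProj_apply, inner_smul_right, inner_self_eq_norm_sq_to_K, hφ]
  · rw [rankOneProj_range φ hφ]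
    exact finrank_span_singleton (by
      intro h0
      rw [h0, norm_zero] at hφ
      norm_num at hφ)

lemma inner_rankOneProj_self (φ x : H) :
    ⟪rankOneProj φ x, x⟫_ℂ = ((‖⟪φ, x⟫_ℂ‖ ^ 2 : ℝ) : ℂ) := by
  rw [rankOneProj_apply, inner_smul_left, RCLike.conj_mul]
  norm_cast

lemma re_inner_smul_proj (φ x : H) (t : ℝ) :
    re ⟪(t • rankOneProj φ) x, x⟫_ℂ = t * ‖⟪φ, x⟫_ℂ‖ ^ 2 := by
  rw [ContinuousLinearMap.smul_apply, RCLike.real_smul_eq_coe_smul (K := ℂ), inner_smul_left,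
    inner_rankOneProj_self, RCLike.conj_ofReal, RCLike.re_ofReal_mul]
  congr 1

lemma real_smul_CLM (t : ℝ) (P : H →L[ℂ] H) : t • P = (t : ℂ) • P := by
  ext x
  show t • P x = (t : ℂ) • P x
  exact RCLike.real_smul_eq_coe_smul (K := ℂ) t (P x)

lemma smul_rankOneProj_isSelfAdjoint (φ : H) (t : ℝ) :
    IsSelfAdjoint (t • rankOneProj φ) := by
  rw [isSelfAdjoint_iff_isSymmetric]
  intro x y
  have hs := (isSelfAdjoint_iff_isSymmetric.mp (rankOneProj_isSelfAdjoint φ)) x y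
  show ⟪t • rankOneProj φ x, y⟫_ℂ = ⟪x, t • rankOneProj φ y⟫_ℂ
  rw [RCLike.real_smul_eq_coe_smul (K := ℂ), RCLike.real_smul_eq_coe_smul (K := ℂ),
    inner_smul_left, inner_smul_right, RCLike.conj_ofReal]
  exact congrArg (fun w => ((t : ℝ) : ℂ) * w) hs

lemma smul_rankOneProj_le_iff {T : H →L[ℂ] H} (hT : IsSelfAdjoint T) (φ : H) (t : ℝ) :
    t • rankOneProj φ ≤ T ↔ ∀ x, t * ‖⟪φ, x⟫_ℂ‖ ^ 2 ≤ re ⟪T x, x⟫_ℂ := by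
  have hsa : IsSelfAdjoint (T - t • rankOneProj φ) :=
    hT.sub (smul_rankOneProj_isSelfAdjoint φ t)
  rw [ContinuousLinearMap.le_def]
  constructor
  · intro hp x
    have h2 := hp.re_inner_nonneg_left x
    rw [ContinuousLinearMap.sub_apply, inner_sub_left, map_sub, re_inner_smul_proj] at h2
    linarith
  · intro hx
    refine ⟨isSelfAdjoint_iff_isSymmetric.mp hsa, fun x => ?_⟩
    rw [ContinuousLinearMap.reApplyInnerSelf_apply, ContinuousLinearMap.sub_apply,
      inner_sub_left, map_sub, re_inner_smul_proj]
    linarith [hx x]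

lemma key_le (T₁ T₂ : H →L[ℂ] H)
    (hT₁0 : (0 : H →L[ℂ] H) ≤ T₁) (hT₁1 : T₁ ≤ 1)
    (hT₂0 : (0 : H →L[ℂ] H) ≤ T₂) (hT₂1 : T₂ ≤ 1)
    (h : ∀ φ : H, ‖φ‖ = 1 →
      strength T₁ (rankOneProj φ) = strength T₂ (rankOneProj φ)) (ψ : H) :
    re ⟪T₁ ψ, ψ⟫_ℂ ≤ re ⟪T₂ ψ, ψ⟫_ℂ := by
  have pos₁ := (ContinuousLinearMap.nonneg_iff_isPositive T₁).mp hT₁0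
  have pos₂ := (ContinuousLinearMap.nonneg_iff_isPositive T₂).mp hT₂0
  have hq2 : 0 ≤ re ⟪T₂ ψ, ψ⟫_ℂ := pos₂.re_inner_nonneg_left ψ
  set r := re ⟪T₁ ψ, ψ⟫_ℂ with hr
  rcases le_or_gt r 0 with hr0 | hr0
  · linarith
  -- `T₁ ψ ≠ 0`
  have hTψ : T₁ ψ ≠ 0 := by
    intro h0
    simp only [hr, h0, inner_zero_left, map_zero] at hr0
    exact lt_irrefl 0 hr0
  set n := ‖T₁ ψ‖ with hn
  have hn0 : 0 < n := norm_pos_iff.mpr hTψ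
  set φ := (n⁻¹ : ℝ) • T₁ ψ with hφdef
  have hφ : ‖φ‖ = 1 := by
    rw [hφdef, norm_smul, Real.norm_eq_abs, abs_inv, abs_of_pos hn0, ← hn]
    field_simp
  set t := n ^ 2 / r with ht
  -- inner products with φ
  have hinner : ∀ x : H, ‖⟪φ, x⟫_ℂ‖ ^ 2 = n⁻¹ ^ 2 * ‖⟪T₁ ψ, x⟫_ℂ‖ ^ 2 := by
    intro x
    rw [hφdef, RCLike.real_smul_eq_coe_smul (K := ℂ), inner_smul_left, RCLike.conj_ofReal,
      norm_mul]
    rw [mul_pow]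
    congr 1
    rw [RCLike.norm_ofReal, abs_inv, abs_of_pos hn0]
  -- Cauchy–Schwarz instances
  have hCS : ∀ x : H, ‖⟪T₁ ψ, x⟫_ℂ‖ ^ 2 ≤ r * re ⟪T₁ x, x⟫_ℂ := fun x => opCS T₁ pos₁ ψ x
  -- t ≤ 1, i.e. n² ≤ r
  have hn2r : n ^ 2 ≤ r := by
    have h1 := hCS (T₁ ψ)
    have h2 : ⟪T₁ ψ, T₁ ψ⟫_ℂ = ((n ^ 2 : ℝ) : ℂ) := by
      rw [inner_self_eq_norm_sq_to_K]; norm_cast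
    rw [h2] at h1
    have h3 : re ⟪T₁ (T₁ ψ), T₁ ψ⟫_ℂ ≤ n ^ 2 := by
      have h4 := (ContinuousLinearMap.le_def T₁ 1).mp hT₁1 |>.re_inner_nonneg_left (T₁ ψ)
      rw [ContinuousLinearMap.sub_apply, inner_sub_left, map_sub,
        ContinuousLinearMap.one_apply, inner_self_eq_norm_sq] at h4
      linarith
    have h5 : ‖((n ^ 2 : ℝ) : ℂ)‖ = n ^ 2 := by
      rw [Complex.norm_real, Real.norm_eq_abs]
      exact abs_of_nonneg (by positivity)
    rw [h5] at h1
    nlinarith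
  have ht0 : 0 ≤ t := by positivity
  have ht1 : t ≤ 1 := by
    rw [ht, div_le_one hr0]; exact hn2r
  -- t • P ≤ T₁
  have hmem : t • rankOneProj φ ≤ T₁ := by
    rw [smul_rankOneProj_le_iff pos₁.isSelfAdjoint]
    intro x
    rw [hinner x]
    have := hCS x
    have hne : n ^ 2 ≠ 0 := by positivity
    rw [ht]
    rw [div_mul_eq_mul_div, div_le_iff₀ hr0]
    calc n ^ 2 * (n⁻¹ ^ 2 * ‖⟪T₁ ψ, x⟫_ℂ‖ ^ 2) = ‖⟪T₁ ψ, x⟫_ℂ‖ ^ 2 := by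
          field_simp
      _ ≤ re ⟪T₁ x, x⟫_ℂ * r := by linarith [hCS x]
  -- t is at most the strength of T₂ along P
  have hbdd : BddAbove {s : ℝ | s ∈ Set.Icc (0:ℝ) 1 ∧ s • rankOneProj φ ≤ T₁} :=
    ⟨1, fun s hs => hs.1.2⟩
  have hle1 : t ≤ strength T₁ (rankOneProj φ) :=
    le_csSup hbdd ⟨⟨ht0, ht1⟩, hmem⟩
  have hle2 : t ≤ strength T₂ (rankOneProj φ) := by
    rw [← h φ hφ]; exact hle1
  -- hence t • P ≤ T₂
  have hmem2 : t • rankOneProj φ ≤ T₂ := by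
    rw [smul_rankOneProj_le_iff pos₂.isSelfAdjoint]
    intro x
    set p := ‖⟪φ, x⟫_ℂ‖ ^ 2 with hp
    set q := re ⟪T₂ x, x⟫_ℂ with hqq
    have hq0 : 0 ≤ q := pos₂.re_inner_nonneg_left x
    rcases eq_or_lt_of_le (by positivity : (0:ℝ) ≤ p) with hp0 | hp0
    · rw [← hp0]; simpa using hq0
    · have hsup : strength T₂ (rankOneProj φ) ≤ q / p := by
        apply csSup_le
        · exact ⟨0, ⟨le_refl 0, zero_le_one⟩, by
            rw [zero_smul]; exact hT₂0⟩
        · intro s hs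
          have := (smul_rankOneProj_le_iff pos₂.isSelfAdjoint φ s).mp hs.2 x
          rw [le_div_iff₀ hp0]
          exact this
      have := le_trans hle2 hsup
      rw [le_div_iff₀ hp0] at this
      exact this
  -- evaluate at ψ
  have heval := (smul_rankOneProj_le_iff pos₂.isSelfAdjoint φ t).mp hmem2 ψ
  have hre_norm : r ≤ ‖⟪T₁ ψ, ψ⟫_ℂ‖ := by
    rw [hr]
    exact (RCLike.re_le_norm _)
  have hcalc : r ≤ t * ‖⟪φ, ψ⟫_ℂ‖ ^ 2 := by
    rw [hinner ψ, ht]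
    have hne : n ≠ 0 := ne_of_gt hn0
    have : n ^ 2 / r * (n⁻¹ ^ 2 * ‖⟪T₁ ψ, ψ⟫_ℂ‖ ^ 2) = ‖⟪T₁ ψ, ψ⟫_ℂ‖ ^ 2 / r := by
      field_simp
    rw [this, le_div_iff₀ hr0]
    nlinarith
  linarith

theorem effect_eq_of_strength_eq (T₁ T₂ : H →L[ℂ] H)
    (hT₁0 : (0 : H →L[ℂ] H) ≤ T₁) (hT₁1 : T₁ ≤ 1)
    (hT₂0 : (0 : H →L[ℂ] H) ≤ T₂) (hT₂1 : T₂ ≤ 1)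
    (h : ∀ φ : H, ‖φ‖ = 1 → ∀ P : H →L[ℂ] H, IsRankOneProjection P →
      LinearMap.range (P : H →ₗ[ℂ] H) = Submodule.span ℂ {φ} → strength T₁ P = strength T₂ P) :
    T₁ = T₂ := by
  have h' : ∀ φ : H, ‖φ‖ = 1 →
      strength T₁ (rankOneProj φ) = strength T₂ (rankOneProj φ) := fun φ hφ =>
    h φ hφ (rankOneProj φ) (rankOneProj_isRankOneProjection φ hφ) (rankOneProj_range φ hφ)
  have h'' : ∀ φ : H, ‖φ‖ = 1 →
      strength T₂ (rankOneProj φ) = strength T₁ (rankOneProj φ) := fun φ hφ => (h' φ hφ).symm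
  have sa₁ := ((ContinuousLinearMap.nonneg_iff_isPositive T₁).mp hT₁0).isSelfAdjoint
  have sa₂ := ((ContinuousLinearMap.nonneg_iff_isPositive T₂).mp hT₂0).isSelfAdjoint
  apply le_antisymm
  · rw [ContinuousLinearMap.le_def]
    refine ⟨isSelfAdjoint_iff_isSymmetric.mp (sa₂.sub sa₁), fun x => ?_⟩
    rw [ContinuousLinearMap.reApplyInnerSelf_apply, ContinuousLinearMap.sub_apply,
      inner_sub_left, map_sub]
    have := key_le T₁ T₂ hT₁0 hT₁1 hT₂0 hT₂1 h' x
    linarith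
  · rw [ContinuousLinearMap.le_def]
    refine ⟨isSelfAdjoint_iff_isSymmetric.mp (sa₁.sub sa₂), fun x => ?_⟩
    rw [ContinuousLinearMap.reApplyInnerSelf_apply, ContinuousLinearMap.sub_apply,
      inner_sub_left, map_sub]
    have := key_le T₂ T₁ hT₂0 hT₂1 hT₁0 hT₁1 h'' x
    linarith
end

section
/- Let φ : S(H) → S(H) be a bijection of the states of a complex Hilbert space H that preserves compatibility in both directions, i.e., range(A^{1/2}) ∩ range(B^{1/2}) = {0} if and only if range(φ(A)^{1/2}) ∩ range(φ(B)^{1/2}) = {0}. Then φ maps pure states onto pure states, i.e., A is a rank-one projection if and only if φ(A) is. -/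
open scoped InnerProductSpace

variable {H : Type*} [NormedAddCommGroup H] [InnerProductSpace ℂ H] [CompleteSpace H]

set_option linter.unusedSectionVars false

noncomputable def proj (x : H) : H →L[ℂ] H := (innerSL ℂ x).smulRight x

lemma proj_apply (x y : H) : proj x y = ⟪x, y⟫_ℂ • x := rfl

lemma proj_isPositive (x : H) : (proj x).IsPositive := by
  constructor
  · intro y z
    simp only [ContinuousLinearMap.coe_coe, proj_apply, inner_smul_left, inner_smul_right,
      inner_conj_symm]
    ring
  · intro y
    have h : (proj x).reApplyInnerSelf y = RCLike.re (⟪proj x y, y⟫_ℂ) := rfl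
    rw [h, proj_apply, inner_smul_left, RCLike.conj_mul]
    simp only [← RCLike.ofReal_pow, RCLike.ofReal_re]
    positivity

lemma proj_idem {x : H} (hx : ‖x‖ = 1) : IsIdempotentElem (proj x) := by
  rw [IsIdempotentElem]
  ext y
  rw [ContinuousLinearMap.mul_apply, proj_apply, proj_apply, inner_smul_right]
  congr 1
  rw [inner_self_eq_norm_sq_to_K, hx]
  simp

lemma proj_traceOne {x : H} (hx : ‖x‖ = 1) : HasTraceOne (proj x) := by
  intro w b
  have h := (b.hasSum_inner_mul_inner x x).mapL (RCLike.reCLM (K := ℂ))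
  have hxx : RCLike.re (⟪x, x⟫_ℂ) = 1 := by
    rw [inner_self_eq_norm_sq, hx]; norm_num
  rw [RCLike.reCLM_apply] at h
  rw [hxx] at h
  have e : (fun i => RCLike.re ⟪(b i : H), proj x (b i)⟫_ℂ)
      = fun i => RCLike.re (⟪x, b i⟫_ℂ * ⟪b i, x⟫_ℂ) := by
    funext i
    rw [proj_apply, inner_smul_right]
  rw [e]; exact h

lemma range_proj {x : H} (hx : ‖x‖ = 1) : LinearMap.range (proj x : H →ₗ[ℂ] H) = (ℂ ∙ x) := by
  apply le_antisymm
  · rintro y ⟨z, rfl⟩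
    exact Submodule.smul_mem _ _ (Submodule.mem_span_singleton_self x)
  · rw [Submodule.span_singleton_le_iff_mem]
    refine ⟨x, ?_⟩
    rw [ContinuousLinearMap.coe_coe, proj_apply, inner_self_eq_norm_sq_to_K, hx]
    simp

lemma opSqrt_proj {x : H} (hx : ‖x‖ = 1) : opSqrt (proj x) = proj x :=
  CFC.sqrt_unique (proj_idem hx) ((proj x).nonneg_iff_isPositive.mpr (proj_isPositive x))

lemma isState_proj {x : H} (hx : ‖x‖ = 1) : IsState (proj x) :=
  ⟨proj_isPositive x, proj_traceOne hx⟩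

lemma IsState.nonneg {A : H →L[ℂ] H} (hA : IsState A) : 0 ≤ A :=
  A.nonneg_iff_isPositive.mpr hA.1

lemma IsState.ne_zero {A : H →L[ℂ] H} (hA : IsState A) : A ≠ 0 := by
  rintro rfl
  obtain ⟨w, b, -⟩ := exists_hilbertBasis ℂ H
  have h := hA.2 w b
  simp only [ContinuousLinearMap.zero_apply, inner_zero_right, map_zero] at h
  simpa using h.unique hasSum_zero

lemma opSqrt_mul_self {A : H →L[ℂ] H} (hA : IsState A) : opSqrt A * opSqrt A = A :=
  CFC.sqrt_mul_sqrt_self A hA.nonneg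

lemma range_le_range_sqrt {A : H →L[ℂ] H} (hA : IsState A) :
    LinearMap.range (A : H →ₗ[ℂ] H) ≤ LinearMap.range (opSqrt A : H →ₗ[ℂ] H) := by
  rintro y ⟨z, rfl⟩
  refine ⟨opSqrt A z, ?_⟩
  conv_rhs => rw [← opSqrt_mul_self hA]
  rfl

lemma range_sqrt_ne_bot {A : H →L[ℂ] H} (hA : IsState A) :
    LinearMap.range (opSqrt A : H →ₗ[ℂ] H) ≠ ⊥ := by
  intro h
  apply hA.ne_zero
  have hs : opSqrt A = 0 := by
    ext z
    have : opSqrt A z ∈ LinearMap.range (opSqrt A : H →ₗ[ℂ] H) := ⟨z, rfl⟩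
    rw [h] at this
    simpa using this
  rw [← opSqrt_mul_self hA, hs, mul_zero]

lemma norm_inv_norm_smul {x : H} (hx : x ≠ 0) : ‖((‖x‖ : ℂ))⁻¹ • x‖ = 1 := by
  have h : ‖x‖ ≠ 0 := norm_ne_zero_iff.mpr hx
  rw [norm_smul, norm_inv]
  simp [Complex.norm_real, abs_of_nonneg (norm_nonneg x), h]

lemma isRankOneProjection_of_range_le_span {A : H →L[ℂ] H} (hA : IsState A) {x : H}
    (hx : LinearMap.range (A : H →ₗ[ℂ] H) ≤ (ℂ ∙ x)) : IsRankOneProjection A := by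
  classical
  obtain ⟨z, hz⟩ : ∃ z, A z ≠ 0 := by
    by_contra h
    push_neg at h
    exact hA.ne_zero (ContinuousLinearMap.ext h)
  set u : H := ((‖A z‖ : ℂ))⁻¹ • A z with hu
  have hun : ‖u‖ = 1 := norm_inv_norm_smul hz
  have hune : u ≠ 0 := by intro h; rw [h] at hun; simp at hun
  have hspan : (ℂ ∙ u) = (ℂ ∙ x) := by
    have hne : ((‖A z‖ : ℂ)) ≠ 0 := by
      simpa using norm_ne_zero_iff.mpr hz
    have h1 : (ℂ ∙ u) = (ℂ ∙ (A z)) := by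
      rw [hu]
      exact Submodule.span_singleton_smul_eq (isUnit_iff_ne_zero.mpr (inv_ne_zero hne)) _
    obtain ⟨c, hc⟩ := Submodule.mem_span_singleton.mp (hx ⟨z, rfl⟩)
    have hcne : c ≠ 0 := by rintro rfl; simp at hc; exact hz hc.symm
    rw [ContinuousLinearMap.coe_coe] at hc
    rw [h1, ← hc, Submodule.span_singleton_smul_eq (isUnit_iff_ne_zero.mpr hcne)]
  have hrange : LinearMap.range (A : H →ₗ[ℂ] H) ≤ (ℂ ∙ u) := hspan ▸ hx
  have hsym := hA.1.1
  have huu : ⟪u, u⟫_ℂ = 1 := by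
    rw [inner_self_eq_norm_sq_to_K, hun]; norm_num
  obtain ⟨s, hs⟩ : ∃ s : ℂ, A u = s • u := by
    obtain ⟨s, hs⟩ := Submodule.mem_span_singleton.mp (hrange ⟨u, rfl⟩)
    exact ⟨s, hs.symm⟩
  have hker : ∀ v : H, ⟪u, v⟫_ℂ = 0 → A v = 0 := by
    intro v hv
    obtain ⟨c, hc⟩ := Submodule.mem_span_singleton.mp (hrange ⟨v, rfl⟩)
    have h1 : ⟪A v, A v⟫_ℂ = 0 := by
      have h2 : ⟪(A : H →ₗ[ℂ] H) v, (A : H →ₗ[ℂ] H) v⟫_ℂ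
          = ⟪v, (A : H →ₗ[ℂ] H) ((A : H →ₗ[ℂ] H) v)⟫_ℂ := hsym v _
      simp only [ContinuousLinearMap.coe_coe] at h2
      rw [h2]
      have h3 : A (A v) = (c * s) • u := by
        rw [show A v = c • u from hc.symm, map_smul, hs, smul_smul]
      rw [h3, inner_smul_right, ← inner_conj_symm, hv, map_zero, mul_zero]
    exact inner_self_eq_zero.mp h1
  have hAy : ∀ y : H, A y = (⟪u, y⟫_ℂ * s) • u := by
    intro y
    have hv : ⟪u, y - ⟪u, y⟫_ℂ • u⟫_ℂ = 0 := by
      rw [inner_sub_right, inner_smul_right, huu, mul_one, sub_self]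
    have hy : y = ⟪u, y⟫_ℂ • u + (y - ⟪u, y⟫_ℂ • u) := by abel
    conv_lhs => rw [hy]
    rw [map_add, map_smul, hker _ hv, add_zero, hs, smul_smul]
  -- trace computation
  have horth : Orthonormal ℂ ((↑) : ({u} : Set H) → H) := by
    constructor
    · rintro ⟨i, hi⟩
      simp only [Set.mem_singleton_iff] at hi
      simpa [hi] using hun
    · rintro ⟨i, hi⟩ ⟨j, hj⟩ hij
      exact absurd (Subtype.ext (by
        simp only [Set.mem_singleton_iff] at hi hj
        simp [hi, hj])) hij
  obtain ⟨w, b, hsub, hcoe⟩ := horth.exists_hilbertBasis_extension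
  have hu_w : u ∈ w := hsub rfl
  have htr := hA.2 w b
  have hbi : ∀ i : w, (b i : H) = (i : H) := fun i => by rw [hcoe]
  have hfun : ∀ i : w, RCLike.re (⟪(b i : H), A (b i)⟫_ℂ)
      = if i = ⟨u, hu_w⟩ then RCLike.re s else 0 := by
    intro i
    by_cases hi : i = (⟨u, hu_w⟩ : w)
    · subst hi
      rw [if_pos rfl, hbi, hs]
      simp only [inner_smul_right]
      rw [huu, mul_one]
    · rw [if_neg hi, hbi]
      have hiu : ⟪u, (i : H)⟫_ℂ = 0 := by
        have h0 : ⟪(b ⟨u, hu_w⟩ : H), (b i : H)⟫_ℂ = 0 := b.orthonormal.2 (Ne.symm hi)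
        rw [hbi, hbi] at h0
        exact h0
      rw [hAy, hiu, zero_mul, zero_smul, inner_zero_right, map_zero]
  have htr' : HasSum (fun i : w => if i = (⟨u, hu_w⟩ : w) then RCLike.re s else 0) 1 := by
    convert htr using 1
    funext i
    rw [hfun i]
  have hres : RCLike.re s = 1 := (hasSum_ite_eq (⟨u, hu_w⟩ : w) (RCLike.re s)).unique htr'
  have hsr : (starRingEnd ℂ) s = s := by
    have h1 : ⟪u, A u⟫_ℂ = s := by rw [hs, inner_smul_right, huu, mul_one]
    have h2 : ⟪(A : H →ₗ[ℂ] H) u, u⟫_ℂ = ⟪u, (A : H →ₗ[ℂ] H) u⟫_ℂ := hsym u u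
    simp only [ContinuousLinearMap.coe_coe] at h2
    calc (starRingEnd ℂ) s = (starRingEnd ℂ) ⟪u, A u⟫_ℂ := by rw [h1]
      _ = ⟪A u, u⟫_ℂ := inner_conj_symm _ _
      _ = ⟪u, A u⟫_ℂ := h2
      _ = s := h1
  have hs1 : s = 1 := by
    apply Complex.ext
    · simpa using hres
    · simpa using (Complex.conj_eq_iff_im.mp hsr)
  have hAeq : A = proj u := by
    ext y
    rw [proj_apply, hAy y, hs1, mul_one]
  rw [hAeq]
  exact ⟨proj_idem hun, (proj_isPositive u).isSelfAdjoint,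
    by rw [range_proj hun]; exact finrank_span_singleton hune⟩

def Compat (A B : H →L[ℂ] H) : Prop :=
  LinearMap.range (opSqrt A : H →ₗ[ℂ] H) ⊓ LinearMap.range (opSqrt B : H →ₗ[ℂ] H) ≠ ⊥

lemma compat_iff {A B : H →L[ℂ] H} : Compat A B ↔
    ∃ z : H, z ∈ LinearMap.range (opSqrt A : H →ₗ[ℂ] H) ∧ z ∈ LinearMap.range (opSqrt B : H →ₗ[ℂ] H) ∧ z ≠ 0 := by
  rw [Compat, Submodule.ne_bot_iff]
  simp only [Submodule.mem_inf]
  tauto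

lemma span_normalize {x : H} (hx : x ≠ 0) : (ℂ ∙ (((‖x‖ : ℂ))⁻¹ • x)) = (ℂ ∙ x) :=
  Submodule.span_singleton_smul_eq
    (isUnit_iff_ne_zero.mpr (inv_ne_zero (by simpa using norm_ne_zero_iff.mpr hx))) x

lemma mem_of_smul_mem {p : Submodule ℂ H} {y z : H} {d : ℂ} (hd : d • y = z) (hzne : z ≠ 0)
    (hz : z ∈ p) : y ∈ p := by
  have hdne : d ≠ 0 := by rintro rfl; rw [zero_smul] at hd; exact hzne hd.symm
  have hy : y = d⁻¹ • z := by rw [← hd, smul_smul, inv_mul_cancel₀ hdne, one_smul]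
  rw [hy]; exact p.smul_mem _ hz

lemma range_opSqrt_pure {A : H →L[ℂ] H} (hA : IsState A) (hp : IsRankOneProjection A) :
    ∃ x : H, x ≠ 0 ∧ LinearMap.range (opSqrt A : H →ₗ[ℂ] H) = (ℂ ∙ x) := by
  have hsq : opSqrt A = A := CFC.sqrt_unique hp.1 hA.nonneg
  have hbot : LinearMap.range (A : H →ₗ[ℂ] H) ≠ ⊥ := by
    intro h
    have := hp.2.2
    rw [h] at this
    simp at this
  obtain ⟨x, hx, hxne⟩ := (Submodule.ne_bot_iff _).mp hbot
  have h1 := (finrank_eq_one_iff_of_nonzero' (⟨x, hx⟩ : LinearMap.range (A : H →ₗ[ℂ] H))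
    (by simpa using hxne)).mp hp.2.2
  have hle : LinearMap.range (A : H →ₗ[ℂ] H) ≤ (ℂ ∙ x) := by
    intro y hy
    obtain ⟨c, hc⟩ := h1 ⟨y, hy⟩
    rw [Submodule.mem_span_singleton]
    exact ⟨c, congrArg Subtype.val hc⟩
  exact ⟨x, hxne, by
    rw [hsq]
    exact le_antisymm hle ((Submodule.span_singleton_le_iff_mem _ _).mpr hx)⟩

def MinState (A : H →L[ℂ] H) : Prop :=
  ∀ B, IsState B → (∀ C, IsState C → Compat C B → Compat C A) →
    ∀ C, IsState C → Compat C A → Compat C B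

lemma pure_iff_min {A : H →L[ℂ] H} (hA : IsState A) : IsRankOneProjection A ↔ MinState A := by
  constructor
  · intro hp B hB h C hC hCA
    obtain ⟨x, hxne, hxr⟩ := range_opSqrt_pure hA hp
    have hBle : LinearMap.range (opSqrt B : H →ₗ[ℂ] H) ≤ (ℂ ∙ x) := by
      intro y hy
      by_cases hy0 : y = 0
      · rw [hy0]; exact Submodule.zero_mem _
      · have hyn : ‖((‖y‖ : ℂ))⁻¹ • y‖ = 1 := norm_inv_norm_smul hy0
        have hcompat : Compat (proj (((‖y‖ : ℂ))⁻¹ • y)) B := by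
          rw [compat_iff]
          refine ⟨y, ?_, hy, hy0⟩
          rw [opSqrt_proj hyn, range_proj hyn, span_normalize hy0]
          exact Submodule.mem_span_singleton_self y
        have hCAp := h _ (isState_proj hyn) hcompat
        rw [compat_iff] at hCAp
        obtain ⟨z, hz1, hz2, hzne⟩ := hCAp
        rw [opSqrt_proj hyn, range_proj hyn, span_normalize hy0] at hz1
        rw [hxr] at hz2
        obtain ⟨d, hd⟩ := Submodule.mem_span_singleton.mp hz1
        exact mem_of_smul_mem hd hzne hz2
    have hxB : x ∈ LinearMap.range (opSqrt B : H →ₗ[ℂ] H) := by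
      obtain ⟨y, hy, hyne⟩ := (Submodule.ne_bot_iff _).mp (range_sqrt_ne_bot hB)
      obtain ⟨d, hd⟩ := Submodule.mem_span_singleton.mp (hBle hy)
      exact mem_of_smul_mem hd hyne hy
    have hBeq : LinearMap.range (opSqrt B : H →ₗ[ℂ] H) = LinearMap.range (opSqrt A : H →ₗ[ℂ] H) := by
      rw [hxr]
      exact le_antisymm hBle ((Submodule.span_singleton_le_iff_mem _ _).mpr hxB)
    show LinearMap.range (opSqrt C : H →ₗ[ℂ] H) ⊓ LinearMap.range (opSqrt B : H →ₗ[ℂ] H) ≠ ⊥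
    rw [hBeq]
    exact hCA
  · intro hmin
    obtain ⟨x, hxA, hxne⟩ := (Submodule.ne_bot_iff _).mp (range_sqrt_ne_bot hA)
    by_cases hcase : LinearMap.range (opSqrt A : H →ₗ[ℂ] H) ≤ (ℂ ∙ x)
    · exact isRankOneProjection_of_range_le_span hA ((range_le_range_sqrt hA).trans hcase)
    · exfalso
      obtain ⟨y, hyA, hynot⟩ := SetLike.not_le_iff_exists.mp hcase
      have hyne : y ≠ 0 := fun h => hynot (h ▸ Submodule.zero_mem _)
      have hxn : ‖((‖x‖ : ℂ))⁻¹ • x‖ = 1 := norm_inv_norm_smul hxne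
      have hyn : ‖((‖y‖ : ℂ))⁻¹ • y‖ = 1 := norm_inv_norm_smul hyne
      have h1 : ∀ C, IsState C → Compat C (proj (((‖x‖ : ℂ))⁻¹ • x)) → Compat C A := by
        intro C hC hCB
        rw [compat_iff] at hCB ⊢
        obtain ⟨z, hz1, hz2, hzne⟩ := hCB
        rw [opSqrt_proj hxn, range_proj hxn, span_normalize hxne] at hz2
        refine ⟨z, hz1, ?_, hzne⟩
        obtain ⟨d, hd⟩ := Submodule.mem_span_singleton.mp hz2
        rw [← hd]
        exact Submodule.smul_mem _ _ hxA
      have hcpA : Compat (proj (((‖y‖ : ℂ))⁻¹ • y)) A := by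
        rw [compat_iff]
        refine ⟨y, ?_, hyA, hyne⟩
        rw [opSqrt_proj hyn, range_proj hyn, span_normalize hyne]
        exact Submodule.mem_span_singleton_self y
      have h2 := hmin _ (isState_proj hxn) h1 _ (isState_proj hyn) hcpA
      rw [compat_iff] at h2
      obtain ⟨z, hz1, hz2, hzne⟩ := h2
      rw [opSqrt_proj hyn, range_proj hyn, span_normalize hyne] at hz1
      rw [opSqrt_proj hxn, range_proj hxn, span_normalize hxne] at hz2
      obtain ⟨d, hd⟩ := Submodule.mem_span_singleton.mp hz1
      exact hynot (mem_of_smul_mem hd hzne hz2)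

theorem preserver_maps_pure_to_pure (hdim : 2 ≤ Module.rank ℂ H)
    (φ : (H →L[ℂ] H) → (H →L[ℂ] H))
    (hφS : Set.BijOn φ {A | IsState A} {A | IsState A})
    (hφ : ∀ A B, IsState A → IsState B →
      (LinearMap.range (opSqrt A : H →ₗ[ℂ] H) ⊓ LinearMap.range (opSqrt B : H →ₗ[ℂ] H) = ⊥ ↔
        LinearMap.range (opSqrt (φ A) : H →ₗ[ℂ] H) ⊓ LinearMap.range (opSqrt (φ B) : H →ₗ[ℂ] H) = ⊥)) :
    ∀ A, IsState A → (IsRankOneProjection A ↔ IsRankOneProjection (φ A)) := by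
  intro A hA
  have hmem : ∀ {B : H →L[ℂ] H}, IsState B → IsState (φ B) := fun hB => hφS.mapsTo hB
  have hcompat : ∀ B C : H →L[ℂ] H, IsState B → IsState C →
      (Compat C B ↔ Compat (φ C) (φ B)) := fun B C hB hC =>
    not_iff_not.mpr (hφ C B hC hB)
  rw [pure_iff_min hA, pure_iff_min (hmem hA)]
  constructor
  · intro hmin B' hB' h C' hC' hCA
    obtain ⟨B, hB, rfl⟩ := hφS.surjOn hB'
    obtain ⟨C, hC, rfl⟩ := hφS.surjOn hC'
    have h' : ∀ C, IsState C → Compat C B → Compat C A := by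
      intro C0 hC0 hc
      exact (hcompat A C0 hA hC0).mpr (h (φ C0) (hmem hC0) ((hcompat B C0 hB hC0).mp hc))
    exact (hcompat B C hB hC).mp
      (hmin B hB h' C hC ((hcompat A C hA hC).mpr hCA))
  · intro hmin B hB h C hC hCA
    have h' : ∀ C', IsState C' → Compat C' (φ B) → Compat C' (φ A) := by
      intro C' hC' hc
      obtain ⟨C0, hC0, rfl⟩ := hφS.surjOn hC'
      exact (hcompat A C0 hA hC0).mp (h C0 hC0 ((hcompat B C0 hB hC0).mpr hc))
    exact (hcompat B C hB hC).mpr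
      (hmin (φ B) (hmem hB) h' (φ C) (hmem hC) ((hcompat A C hA hC).mp hCA))
end
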